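/- Let L_c : ℝ^n → ℝ be an L-smooth differentiable function (‖∇L_c(x) − ∇L_c(y)‖ ≤ L‖x−y‖), and suppose ∇L_c(θ)·∇L_u(θ) = 0. For θ' = θ − η(α∇L_u(θ) + (1−α)∇L_c(θ)), we have L_c(θ') ≤ L_c(θ) − η(1−α)‖∇L_c(θ)‖² + (Lη²/2)‖α∇L_u(θ) + (1−α)∇L_c(θ)‖². -/

import Mathlib

open Set

lemma descent_lemma {E : Type*} [NormedAddCommGroup E] [InnerProductSpace ℝ E]
    [CompleteSpace E] (f : E → ℝ) (L : ℝ) (hf : Differentiable ℝ f) (hL : 0 ≤ L)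
    (hsm : ∀ x y, ‖gradient f x - gradient f y‖ ≤ L * ‖x - y‖) (x v : E) :
    f (x + v) ≤ f x + (inner ℝ (gradient f x) v : ℝ) + L / 2 * ‖v‖ ^ 2 := by
  set A : ℝ := inner ℝ (gradient f x) v with hA
  have hφ : ∀ t : ℝ, HasDerivAt (fun t : ℝ => f (x + t • v))
      (inner ℝ (gradient f (x + t • v)) v : ℝ) t := by
    intro t
    have h1 : HasDerivAt (fun t : ℝ => x + t • v) v t := by
      simpa using ((hasDerivAt_id t).smul_const v).const_add x
    have h2 := (hf (x + t • v)).hasGradientAt.hasFDerivAt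
    have h3 := h2.comp_hasDerivAt t h1
    rw [InnerProductSpace.toDual_apply_apply] at h3
    exact h3
  set h : ℝ → ℝ := fun t => f (x + t • v) - t * A - L * ‖v‖ ^ 2 * t ^ 2 / 2 with hh'
  have hh : ∀ t : ℝ, HasDerivAt h
      ((inner ℝ (gradient f (x + t • v)) v : ℝ) - A - L * ‖v‖ ^ 2 * t) t := by
    intro t
    have h1 : HasDerivAt (fun t : ℝ => t * A) A t := by
      simpa using (hasDerivAt_id t).mul_const A
    have h2 : HasDerivAt (fun t : ℝ => L * ‖v‖ ^ 2 * t ^ 2 / 2) (L * ‖v‖ ^ 2 * t) t := by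
      have := ((hasDerivAt_pow 2 t).const_mul (L * ‖v‖ ^ 2)).div_const 2
      convert this using 1
      · rfl
      · rfl
      · ring
    exact ((hφ t).sub h1).sub h2
  have hanti : AntitoneOn h (Icc (0:ℝ) 1) := by
    apply antitoneOn_of_deriv_nonpos (convex_Icc 0 1)
    · exact fun t _ => (hh t).differentiableAt.continuousAt.continuousWithinAt
    · exact fun t _ => (hh t).differentiableAt.differentiableWithinAt
    · intro t ht
      rw [interior_Icc] at ht
      rw [(hh t).deriv]
      have hb : (inner ℝ (gradient f (x + t • v)) v : ℝ) - A ≤ L * ‖v‖ ^ 2 * t := by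
        have h1 : (inner ℝ (gradient f (x + t • v)) v : ℝ) - A
            = inner ℝ (gradient f (x + t • v) - gradient f x) v := by
          rw [inner_sub_left]
        rw [h1]
        calc (inner ℝ (gradient f (x + t • v) - gradient f x) v : ℝ)
            ≤ ‖gradient f (x + t • v) - gradient f x‖ * ‖v‖ :=
              real_inner_le_norm _ _
          _ ≤ (L * ‖x + t • v - x‖) * ‖v‖ := by
              exact mul_le_mul_of_nonneg_right (hsm _ _) (norm_nonneg _)
          _ = L * ‖v‖ ^ 2 * t := by
              have : ‖x + t • v - x‖ = t * ‖v‖ := by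
                rw [add_sub_cancel_left, norm_smul, Real.norm_eq_abs,
                  abs_of_nonneg ht.1.le]
              rw [this]; ring
      linarith
  have h01 : h 1 ≤ h 0 := hanti (by norm_num) (by norm_num) zero_le_one
  simp only [hh', one_smul, zero_smul, add_zero, one_mul, one_pow, mul_one,
    zero_mul, mul_zero, zero_div, sub_zero, zero_pow] at h01
  linarith [h01]

theorem stmt7 (n : ℕ) (Lc Lu : EuclideanSpace ℝ (Fin n) → ℝ) (L : ℝ)
    (hLc : Differentiable ℝ Lc) (hLu : Differentiable ℝ Lu)
    (hsmooth : ∀ x y, ‖gradient Lc x - gradient Lc y‖ ≤ L * ‖x - y‖)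
    (α η : ℝ) (hα : α ∈ Set.Icc (0:ℝ) 1) (hη : 0 < η)
    (θ θ' : EuclideanSpace ℝ (Fin n))
    (horth : (inner ℝ (gradient Lc θ) (gradient Lu θ) : ℝ) = 0)
    (hstep : θ' = θ - η • (α • gradient Lu θ + (1 - α) • gradient Lc θ)) :
    Lc θ' ≤ Lc θ - η * (1 - α) * ‖gradient Lc θ‖ ^ 2
      + (L * η ^ 2 / 2) * ‖α • gradient Lu θ + (1 - α) • gradient Lc θ‖ ^ 2 := by
  rcases Nat.eq_zero_or_pos n with hn | hn
  · subst hn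
    have hθ : θ' = θ := Subsingleton.elim _ _
    have hg : gradient Lc θ = 0 := Subsingleton.elim _ _
    have hw : α • gradient Lu θ + (1 - α) • gradient Lc θ = 0 := Subsingleton.elim _ _
    rw [hθ, hw, hg]
    simp
  · have hL : 0 ≤ L := by
      have h1 := hsmooth (EuclideanSpace.single (⟨0, hn⟩ : Fin n) (1:ℝ)) 0
      have h2 : ‖(EuclideanSpace.single (⟨0, hn⟩ : Fin n) (1:ℝ)) - 0‖ = 1 := by
        simp [EuclideanSpace.norm_single]
      rw [h2, mul_one] at h1
      exact le_trans (norm_nonneg _) h1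
    set w := α • gradient Lu θ + (1 - α) • gradient Lc θ with hw
    have hstep' : θ' = θ + (-(η • w)) := by rw [hstep]; abel
    have key := descent_lemma Lc L hLc hL hsmooth θ (-(η • w))
    rw [← hstep'] at key
    have hinner : (inner ℝ (gradient Lc θ) (-(η • w)) : ℝ)
        = -(η * (1 - α) * ‖gradient Lc θ‖ ^ 2) := by
      rw [inner_neg_right, real_inner_smul_right, hw, inner_add_right,
        real_inner_smul_right, real_inner_smul_right, horth,
        real_inner_self_eq_norm_sq]
      ring
    have hnorm : ‖-(η • w)‖ ^ 2 = η ^ 2 * ‖w‖ ^ 2 := by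
      rw [norm_neg, norm_smul, Real.norm_eq_abs, abs_of_pos hη, mul_pow]
    rw [hinner, hnorm] at key
    calc Lc θ' ≤ Lc θ + -(η * (1 - α) * ‖gradient Lc θ‖ ^ 2)
          + L / 2 * (η ^ 2 * ‖w‖ ^ 2) := key
      _ = Lc θ - η * (1 - α) * ‖gradient Lc θ‖ ^ 2 + L * η ^ 2 / 2 * ‖w‖ ^ 2 := by ring
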